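/- For all 0 < r < π one has ψ(r) > √(ψ′(r)/r); equivalently ψ(r)² > ψ′(r)/r > 0 on (0,π). -/

import Mathlib

open Real MeasureTheory Asymptotics Filter

noncomputable section
open scoped Classical

private lemma aux_pos (f f' : ℝ → ℝ) (hd : ∀ x, HasDerivAt f (f' x) x)
    (h0 : f 0 = 0) (hpos : ∀ x, 0 < x → x < Real.pi → 0 < f' x) :
    ∀ x, 0 < x → x ≤ Real.pi → 0 < f x := by
  intro x hx hxpi
  have hmono : StrictMonoOn f (Set.Icc 0 Real.pi) := by
    apply strictMonoOn_of_deriv_pos (convex_Icc 0 Real.pi)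
    · exact fun y _ => (hd y).continuousAt.continuousWithinAt
    · intro y hy
      rw [interior_Icc] at hy
      rw [(hd y).deriv]
      exact hpos y hy.1 hy.2
  have := hmono (Set.left_mem_Icc.mpr Real.pi_pos.le) ⟨hx.le, hxpi⟩ hx
  rwa [h0] at this

private lemma h_pos : ∀ x : ℝ, 0 < x → x ≤ Real.pi → 0 < Real.sin x - x * Real.cos x := by
  apply aux_pos _ (fun x => x * Real.sin x)
  · intro x
    have h1 := (Real.hasDerivAt_sin x).sub ((hasDerivAt_id' (x := x)).mul (Real.hasDerivAt_cos x))
    refine h1.congr_deriv ?_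
    ring
  · simp
  · intro x hx hxpi
    exact mul_pos hx (Real.sin_pos_of_pos_of_lt_pi hx hxpi)

private lemma g_pos : ∀ x : ℝ, 0 < x → x ≤ Real.pi →
    0 < 3 * Real.sin x - 3 * x * Real.cos x - x ^ 2 * Real.sin x := by
  apply aux_pos _ (fun x => x * (Real.sin x - x * Real.cos x))
  · intro x
    have h1 := (((hasDerivAt_const x (3:ℝ)).mul (Real.hasDerivAt_sin x)).sub
        (((hasDerivAt_const x (3:ℝ)).mul (hasDerivAt_id' (x := x))).mul (Real.hasDerivAt_cos x))).sub
        ((hasDerivAt_pow 2 x).mul (Real.hasDerivAt_sin x))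
    refine h1.congr_deriv ?_
    simp only [Pi.mul_apply, Pi.sub_apply, Pi.pow_apply]
    push_cast
    ring
  · simp
  · intro x hx hxpi
    exact mul_pos hx (h_pos x hx hxpi.le)

private lemma G1_pos : ∀ x : ℝ, 0 < x → x ≤ Real.pi →
    0 < 2 * x - 3 * Real.sin x * Real.cos x + x * (Real.cos x ^ 2 - Real.sin x ^ 2) := by
  apply aux_pos _ (fun x => 4 * Real.sin x * (Real.sin x - x * Real.cos x))
  · intro x
    have h1 := (((hasDerivAt_const x (2:ℝ)).mul (hasDerivAt_id' (x := x))).sub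
        (((hasDerivAt_const x (3:ℝ)).mul (Real.hasDerivAt_sin x)).mul (Real.hasDerivAt_cos x))).add
        ((hasDerivAt_id' (x := x)).mul ((((Real.hasDerivAt_cos x).pow 2)).sub ((Real.hasDerivAt_sin x).pow 2)))
    refine h1.congr_deriv ?_
    simp only [Pi.mul_apply, Pi.sub_apply, Pi.pow_apply]
    push_cast
    linear_combination -2 * Real.sin_sq_add_cos_sq x
  · simp
  · intro x hx hxpi
    have hs := Real.sin_pos_of_pos_of_lt_pi hx hxpi
    have := h_pos x hx hxpi.le
    positivity

private lemma G_pos : ∀ x : ℝ, 0 < x → x ≤ Real.pi →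
    0 < x ^ 2 - 2 * Real.sin x ^ 2 + x * Real.sin x * Real.cos x := by
  apply aux_pos _ (fun x => 2 * x - 3 * Real.sin x * Real.cos x + x * (Real.cos x ^ 2 - Real.sin x ^ 2))
  · intro x
    have h1 := ((hasDerivAt_pow 2 x).sub ((hasDerivAt_const x (2:ℝ)).mul ((Real.hasDerivAt_sin x).pow 2))).add
        (((hasDerivAt_id' (x := x)).mul (Real.hasDerivAt_sin x)).mul (Real.hasDerivAt_cos x))
    refine h1.congr_deriv ?_
    simp only [Pi.mul_apply, Pi.sub_apply, Pi.pow_apply]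
    push_cast
    ring
  · simp
  · intro x hx hxpi
    exact G1_pos x hx hxpi.le

/-- `ψ(r) = (1 − r·cot r)/r²`, extended continuously by `ψ(0) := 1/3`. -/
def psi (r : ℝ) : ℝ := if r = 0 then 1/3 else (1 - r * (Real.cos r / Real.sin r)) / r ^ 2

private lemma psi_deriv (r : ℝ) (hr : 0 < r) (hrpi : r < Real.pi) :
    deriv psi r = (r ^ 2 - 2 * Real.sin r ^ 2 + r * Real.sin r * Real.cos r) / (r ^ 3 * Real.sin r ^ 2) := by
  have hs : Real.sin r ≠ 0 := (Real.sin_pos_of_pos_of_lt_pi hr hrpi).ne'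
  have hr0 : r ≠ 0 := hr.ne'
  have heq : psi =ᶠ[nhds r] fun x => (1 - x * (Real.cos x / Real.sin x)) / x ^ 2 := by
    filter_upwards [isOpen_ne.mem_nhds hr0] with x hx
    simp [psi, hx]
  rw [heq.deriv_eq]
  have hcot : HasDerivAt (fun x => Real.cos x / Real.sin x)
      (((-Real.sin r) * Real.sin r - Real.cos r * Real.cos r) / Real.sin r ^ 2) r :=
    (Real.hasDerivAt_cos r).div (Real.hasDerivAt_sin r) hs
  have hN := (hasDerivAt_const r (1:ℝ)).sub ((hasDerivAt_id' (x := r)).mul hcot)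
  have hF := hN.div (hasDerivAt_pow 2 r) (pow_ne_zero 2 hr0)
  rw [show deriv (fun x => (1 - x * (Real.cos x / Real.sin x)) / x ^ 2) r = _ from hF.deriv]
  have hpy := Real.sin_sq_add_cos_sq r
  simp only [Pi.sub_apply, Pi.mul_apply]
  field_simp
  ring_nf
  linear_combination r ^ 3 * hpy

/-- for `0 < r < π`, `ψ(r) > √(ψ′(r)/r)`; equivalently
`ψ(r)² > ψ′(r)/r > 0` on `(0,π)`. -/
theorem statement15 :
    ∀ r : ℝ, 0 < r → r < Real.pi →
      Real.sqrt (deriv psi r / r) < psi r ∧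
      0 < deriv psi r / r ∧ deriv psi r / r < psi r ^ 2 := by
  intro r hr hrpi
  have hs : 0 < Real.sin r := Real.sin_pos_of_pos_of_lt_pi hr hrpi
  have hr0 : r ≠ 0 := hr.ne'
  have hd := psi_deriv r hr hrpi
  have hG := G_pos r hr hrpi.le
  have hg := g_pos r hr hrpi.le
  have hh := h_pos r hr hrpi.le
  have hpsi : psi r = (Real.sin r - r * Real.cos r) / (r ^ 2 * Real.sin r) := by
    simp only [psi, if_neg hr0]
    rw [div_eq_div_iff (by positivity) (by positivity)]
    field_simp
  have hpsipos : 0 < psi r := by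
    rw [hpsi]
    positivity
  have hApos : 0 < deriv psi r / r := by
    rw [hd, div_div]
    exact div_pos hG (by positivity)
  have hAlt : deriv psi r / r < psi r ^ 2 := by
    have key : psi r ^ 2 - deriv psi r / r
        = (3 * Real.sin r - 3 * r * Real.cos r - r ^ 2 * Real.sin r) / (r ^ 4 * Real.sin r) := by
      rw [hd, hpsi]
      have hpy := Real.sin_sq_add_cos_sq r
      field_simp
      ring_nf
      linear_combination r ^ 2 * hpy
    have : 0 < (3 * Real.sin r - 3 * r * Real.cos r - r ^ 2 * Real.sin r) / (r ^ 4 * Real.sin r) :=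
      div_pos hg (by positivity)
    linarith
  exact ⟨(Real.sqrt_lt' hpsipos).mpr hAlt, hApos, hAlt⟩
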